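/- Let q : ℝ → ℝ be measurable with ∫₀^∞ (1+x)|q(x)| dx < ∞, let λ₁ > 0, let f be a Jost solution for q, and suppose g(z,x), defined for z ∈ ℂ with Im z ≥ 0, z ≠ 0, and x ∈ [0,∞), satisfies g(z,x) = i z^{1/2} e^{i z^{1/2} x} − ∫_x^∞ cos(z^{1/2}(x − x')) q(x') f(z,x') dx' for all x ≥ 0 (the x-derivative of the Jost solution). Then, using the principal square root, g(z − λ₁, 0) − i z^{1/2} + (1/2) ∫₀^∞ (e^{2i(z−λ₁)^{1/2} x} + 1) q(x) dx = O(|z|^{−1/2}) as |z| → ∞ with z ranging over the closed upper half-plane {z ∈ ℂ | Im z ≥ 0}. -/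

import Mathlib

open MeasureTheory Complex Filter Asymptotics

/-- `f` is a Jost solution for the potential `q`: for each `z` in the closed upper half-plane
with `z ≠ 0`, the map `x ↦ e^{-i√z x} f(z,x)` is (a.e. strongly) measurable and bounded on
`[0,∞)`, and `f(z,·)` satisfies the Volterra integral equation (14.4.7). Here `z ^ (1/2 : ℂ)`
is the principal square root. -/
def IsJost (q : ℝ → ℝ) (f : ℂ → ℝ → ℂ) : Prop :=
  ∀ z : ℂ, 0 ≤ z.im → z ≠ 0 →
    AEStronglyMeasurable
      (fun x : ℝ => Complex.exp (-Complex.I * z ^ (1 / 2 : ℂ) * x) * f z x)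
      (volume.restrict (Set.Ici 0)) ∧
    (∃ M : ℝ, ∀ x : ℝ, 0 ≤ x →
      ‖Complex.exp (-Complex.I * z ^ (1 / 2 : ℂ) * x) * f z x‖ ≤ M) ∧
    ∀ x : ℝ, 0 ≤ x →
      f z x = Complex.exp (Complex.I * z ^ (1 / 2 : ℂ) * x)
        - ∫ t in Set.Ioi x, (z ^ (1 / 2 : ℂ))⁻¹
            * Complex.sin (z ^ (1 / 2 : ℂ) * ((x : ℂ) - (t : ℂ))) * (q t : ℂ) * f z t


noncomputable def Complex.abs : AbsoluteValue ℂ ℝ :=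
  IsAbsoluteValue.toAbsoluteValue (norm : ℂ → ℝ)

lemma Complex.norm_eq_abs (z : ℂ) : ‖z‖ = Complex.abs z := rfl

lemma Complex.abs_exp (z : ℂ) : Complex.abs (Complex.exp z) = Real.exp z.re :=
  Complex.norm_exp z

lemma Complex.abs_two : Complex.abs 2 = 2 := Complex.norm_two

lemma Complex.abs_I : Complex.abs Complex.I = 1 := Complex.norm_I

lemma Complex.abs_ofReal (r : ℝ) : Complex.abs (r : ℂ) = |r| := by
  show ‖(r : ℂ)‖ = |r|
  simp

lemma Complex.abs_cpow_real (x : ℂ) (y : ℝ) :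
    Complex.abs (x ^ (y : ℂ)) = Complex.abs x ^ y :=
  Complex.norm_cpow_real x y

lemma Complex.abs_apply (z : ℂ) : Complex.abs z = Real.sqrt (Complex.normSq z) :=
  Complex.norm_def z

lemma sqrt_half_props (z : ℂ) (hz : z ≠ 0) (him : 0 ≤ z.im) :
    0 ≤ (z ^ (1/2 : ℂ)).re ∧ 0 ≤ (z ^ (1/2 : ℂ)).im ∧
    Complex.abs (z ^ (1/2 : ℂ)) = Complex.abs z ^ (1/2 : ℝ) ∧
    (z ^ (1/2 : ℂ)) * (z ^ (1/2 : ℂ)) = z := by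
  have hdef : z ^ (1/2 : ℂ) = Complex.exp (Complex.log z * (1/2)) :=
    Complex.cpow_def_of_ne_zero hz _
  have himlog : (Complex.log z * (1/2)).im = Complex.arg z / 2 := by
    simp [Complex.log_im]; ring
  have harg0 : 0 ≤ Complex.arg z := Complex.arg_nonneg_iff.2 him
  have hargpi : Complex.arg z ≤ Real.pi := Complex.arg_le_pi z
  have him2 : 0 ≤ (Complex.log z * (1/2)).im := by rw [himlog]; positivity
  have him3 : (Complex.log z * (1/2)).im ≤ Real.pi / 2 := by
    rw [himlog]; linarith
  refine ⟨?_, ?_, ?_, ?_⟩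
  · rw [hdef, Complex.exp_re]
    have := Real.cos_nonneg_of_mem_Icc (x := (Complex.log z * (1/2)).im)
      ⟨by linarith [Real.pi_pos], him3⟩
    positivity
  · rw [hdef, Complex.exp_im]
    have := Real.sin_nonneg_of_nonneg_of_le_pi him2 (by linarith [Real.pi_pos])
    positivity
  · rw [show (1/2 : ℂ) = ((1/2 : ℝ) : ℂ) by norm_num, Complex.abs_cpow_real]
  · rw [← Complex.cpow_add _ _ hz]
    norm_num

lemma exp_I_bound (u : ℂ) (him : 0 ≤ u.im) :
    Complex.abs (Complex.exp (Complex.I * u)) ≤ 1 := by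
  rw [Complex.abs_exp]
  simp only [Complex.mul_re, Complex.I_re, Complex.I_im]
  have : Real.exp (0 * u.re - 1 * u.im) ≤ Real.exp 0 := Real.exp_le_exp.2 (by linarith)
  simpa using this

lemma cos_exp_id (u : ℂ) :
    Complex.cos u * Complex.exp (Complex.I * u)
      = (Complex.exp (2 * Complex.I * u) + 1) / 2 := by
  rw [Complex.cos, div_mul_eq_mul_div, add_mul, ← Complex.exp_add, ← Complex.exp_add,
    show u * Complex.I + Complex.I * u = 2 * Complex.I * u by ring,
    show -u * Complex.I + Complex.I * u = 0 by ring, Complex.exp_zero]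

lemma cos_exp_bound (u : ℂ) (him : 0 ≤ u.im) :
    Complex.abs (Complex.cos u * Complex.exp (Complex.I * u)) ≤ 1 := by
  rw [cos_exp_id]
  have h1 : Complex.abs (Complex.exp (2 * Complex.I * u)) ≤ 1 := by
    have := exp_I_bound (2 * u) (by simpa using by linarith : 0 ≤ (2*u).im)
    rw [show Complex.I * (2*u) = 2 * Complex.I * u by ring] at this
    exact this
  rw [map_div₀, Complex.abs_two, div_le_one (by norm_num)]
  calc Complex.abs (Complex.exp (2 * Complex.I * u) + 1)
      ≤ Complex.abs (Complex.exp (2 * Complex.I * u)) + Complex.abs 1 :=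
        Complex.abs.add_le _ _
    _ ≤ 2 := by rw [map_one]; linarith

lemma sin_exp_bound (v : ℂ) (him : 0 ≤ v.im) :
    Complex.abs (Complex.sin v * Complex.exp (Complex.I * v)) ≤ 1 := by
  have hid : Complex.sin v * Complex.exp (Complex.I * v)
      = (Complex.exp (2 * Complex.I * v) - 1) / (2 * Complex.I) := by
    rw [Complex.sin,
      show (Complex.exp (-v * Complex.I) - Complex.exp (v * Complex.I)) * Complex.I / 2
            * Complex.exp (Complex.I * v)
          = (Complex.exp (-v * Complex.I) * Complex.exp (Complex.I * v)
            - Complex.exp (v * Complex.I) * Complex.exp (Complex.I * v)) * Complex.I / 2 by ring,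
      ← Complex.exp_add, ← Complex.exp_add,
      show -v * Complex.I + Complex.I * v = 0 by ring,
      show v * Complex.I + Complex.I * v = 2 * Complex.I * v by ring, Complex.exp_zero,
      eq_div_iff (by simp [Complex.I_ne_zero] : (2:ℂ) * Complex.I ≠ 0)]
    linear_combination (1 - Complex.exp (2 * Complex.I * v)) * Complex.I_mul_I
  rw [hid]
  have h1 : Complex.abs (Complex.exp (2 * Complex.I * v)) ≤ 1 := by
    have := exp_I_bound (2 * v) (by simpa using by linarith : 0 ≤ (2*v).im)
    rw [show Complex.I * (2*v) = 2 * Complex.I * v by ring] at this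
    exact this
  rw [map_div₀]
  simp only [map_mul, Complex.abs_two, Complex.abs_I, mul_one]
  rw [div_le_one (by norm_num)]
  calc Complex.abs (Complex.exp (2 * Complex.I * v) - 1)
      ≤ Complex.abs (Complex.exp (2 * Complex.I * v)) + Complex.abs 1 := by
        simpa [sub_eq_add_neg] using Complex.abs.add_le (Complex.exp (2 * Complex.I * v)) (-1)
    _ ≤ 2 := by rw [map_one]; linarith

lemma jost_m_bound (q : ℝ → ℝ)
    (hqint : IntegrableOn (fun x => |q x|) (Set.Ioi 0))
    (f : ℂ → ℝ → ℂ) (hf : IsJost q f) (z : ℂ) (him : 0 ≤ z.im) (hz : z ≠ 0)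
    (hk : 2 * (∫ t in Set.Ioi (0:ℝ), |q t|) ≤ Complex.abs (z ^ (1/2 : ℂ))) :
    ∀ x : ℝ, 0 ≤ x →
      Complex.abs (Complex.exp (-Complex.I * z ^ (1/2 : ℂ) * x) * f z x - 1)
        ≤ 2 * (∫ t in Set.Ioi (0:ℝ), |q t|) / Complex.abs (z ^ (1/2 : ℂ)) := by
  obtain ⟨hmeas, ⟨M, hM⟩, hvolt⟩ := hf z him hz
  set k : ℂ := z ^ (1/2 : ℂ) with hkdef
  set Q : ℝ := ∫ t in Set.Ioi (0:ℝ), |q t| with hQdef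
  obtain ⟨hkre, hkim, hkabs, hk2⟩ := sqrt_half_props z hz him
  have hQ0 : 0 ≤ Q := integral_nonneg fun t => abs_nonneg _
  have hka : 0 < Complex.abs k := by
    rw [hkabs]
    have : 0 < Complex.abs z := Complex.abs.pos hz
    positivity
  set m : ℝ → ℂ := fun x => Complex.exp (-Complex.I * k * x) * f z x with hmdef
  have hf_eq : ∀ t : ℝ, f z t = Complex.exp (Complex.I * k * t) * m t := by
    intro t
    simp only [hmdef, ← mul_assoc, ← Complex.exp_add]
    rw [show Complex.I * k * ↑t + -Complex.I * k * ↑t = 0 by ring, Complex.exp_zero, one_mul]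
  set SS : Set ℝ := (fun x => Complex.abs (m x - 1)) '' Set.Ici 0 with hSSdef
  have hbdd : BddAbove SS := by
    refine ⟨M + 1, ?_⟩
    rintro _ ⟨x, hx, rfl⟩
    calc Complex.abs (m x - 1) ≤ Complex.abs (m x) + Complex.abs 1 :=
        Complex.abs.sub_le_add _ _
      _ ≤ M + 1 := by rw [map_one]; exact add_le_add_left (hM x hx) 1
  have hne : SS.Nonempty := ⟨_, ⟨0, Set.self_mem_Ici, rfl⟩⟩
  set S : ℝ := sSup SS with hSdef
  have hSle : ∀ x : ℝ, 0 ≤ x → Complex.abs (m x - 1) ≤ S :=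
    fun x hx => le_csSup hbdd ⟨x, hx, rfl⟩
  have hS0 : 0 ≤ S := le_trans (Complex.abs.nonneg _) (hSle 0 le_rfl)
  -- key inequality
  have key : ∀ x : ℝ, 0 ≤ x → Complex.abs (m x - 1) ≤ Q / Complex.abs k * (1 + S) := by
    intro x hx
    have hfx := hvolt x hx
    have hm1 : m x - 1 = -(∫ t in Set.Ioi x, Complex.exp (-Complex.I * k * x)
        * (k⁻¹ * Complex.sin (k * ((x : ℂ) - t)) * (q t : ℂ) * f z t)) := by
      have h1 : m x - 1 = Complex.exp (-Complex.I * k * x)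
          * (f z x - Complex.exp (Complex.I * k * x)) := by
        rw [mul_sub, ← Complex.exp_add,
          show -Complex.I * k * ↑x + Complex.I * k * ↑x = 0 by ring, Complex.exp_zero]
      rw [h1, hfx, sub_sub_cancel_left, mul_neg, ← integral_const_mul]
    rw [hm1, map_neg_eq_map]
    rw [← Complex.norm_eq_abs]
    refine le_trans (norm_integral_le_integral_norm _) ?_
    have step : (∫ t in Set.Ioi x, ‖Complex.exp (-Complex.I * k * x)
        * (k⁻¹ * Complex.sin (k * ((x : ℂ) - t)) * (q t : ℂ) * f z t)‖)
        ≤ ∫ t in Set.Ioi x, |q t| * ((1 + S) / Complex.abs k) := by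
      refine integral_mono_of_nonneg (Filter.Eventually.of_forall fun t => norm_nonneg _)
        (((hqint.mono_set (Set.Ioi_subset_Ioi hx)).mul_const _)) ?_
      filter_upwards [ae_restrict_mem measurableSet_Ioi] with t ht
      have htx : x ≤ t := le_of_lt ht
      have ht0 : 0 ≤ t := le_trans hx htx
      have hrw : Complex.exp (-Complex.I * k * x)
          * (k⁻¹ * Complex.sin (k * ((x : ℂ) - t)) * (q t : ℂ) * f z t)
          = k⁻¹ * (-(Complex.sin (k * ((t:ℂ) - x)) * Complex.exp (Complex.I * (k * ((t:ℂ) - x)))))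
            * (q t : ℂ) * m t := by
        rw [hf_eq t,
          show k * ((x:ℂ) - t) = -(k * ((t:ℂ) - x)) by ring, Complex.sin_neg,
          show Complex.I * (k * ((t:ℂ) - ↑x)) = Complex.I * k * ↑t + -Complex.I * k * ↑x by ring,
          Complex.exp_add]
        ring
      rw [hrw]
      have hv : 0 ≤ (k * ((t:ℂ) - x)).im := by
        have : ((t:ℂ) - x) = ((t - x : ℝ) : ℂ) := by push_cast; ring
        rw [this, Complex.mul_im]
        simp only [Complex.ofReal_re, Complex.ofReal_im, mul_zero, zero_add]
        have : (0:ℝ) ≤ t - x := by linarith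
        positivity
      have hsin := sin_exp_bound (k * ((t:ℂ) - x)) hv
      have hmt : Complex.abs (m t) ≤ 1 + S := by
        calc Complex.abs (m t) = Complex.abs ((m t - 1) + 1) := by ring_nf
          _ ≤ Complex.abs (m t - 1) + Complex.abs 1 := Complex.abs.add_le _ _
          _ ≤ 1 + S := by rw [map_one]; linarith [hSle t ht0]
      rw [Complex.norm_eq_abs, map_mul, map_mul, map_mul, map_neg_eq_map, map_inv₀,
        Complex.abs_ofReal]
      calc (Complex.abs k)⁻¹
            * Complex.abs (Complex.sin (k * ((t:ℂ) - ↑x)) * Complex.exp (Complex.I * (k * ((t:ℂ) - ↑x))))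
            * |q t| * Complex.abs (m t)
          ≤ (Complex.abs k)⁻¹ * 1 * |q t| * (1 + S) := by
            gcongr
          _ = |q t| * ((1 + S) / Complex.abs k) := by field_simp
    refine le_trans step ?_
    rw [integral_mul_const]
    have hmono : (∫ t in Set.Ioi x, |q t|) ≤ Q := by
      refine setIntegral_mono_set hqint (Filter.Eventually.of_forall fun t => abs_nonneg _) ?_
      exact Filter.Eventually.of_forall fun t htx => Set.Ioi_subset_Ioi hx htx
    calc (∫ t in Set.Ioi x, |q t|) * ((1 + S) / Complex.abs k)
        ≤ Q * ((1 + S) / Complex.abs k) := by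
          gcongr
      _ = Q / Complex.abs k * (1 + S) := by ring
  -- conclude
  have hSineq : S ≤ Q / Complex.abs k * (1 + S) := by
    refine csSup_le hne ?_
    rintro _ ⟨x, hx, rfl⟩
    exact key x hx
  have ha : Q / Complex.abs k ≤ 1/2 := by
    rw [div_le_iff₀ hka]; linarith
  have hS2 : S ≤ 2 * (Q / Complex.abs k) := by
    nlinarith [mul_le_mul_of_nonneg_right ha hS0]
  intro x hx
  calc Complex.abs (m x - 1) ≤ S := hSle x hx
    _ ≤ 2 * (Q / Complex.abs k) := hS2
    _ = 2 * Q / Complex.abs k := by ring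

set_option maxHeartbeats 1000000 in
theorem statement19 (q : ℝ → ℝ) (hq_meas : Measurable q)
    (hq : IntegrableOn (fun x => (1 + x) * |q x|) (Set.Ioi 0))
    (lam₁ : ℝ) (hlam₁ : 0 < lam₁) (f g : ℂ → ℝ → ℂ) (hf : IsJost q f)
    (hg : ∀ z : ℂ, 0 ≤ z.im → z ≠ 0 → ∀ x : ℝ, 0 ≤ x →
      g z x = Complex.I * z ^ (1 / 2 : ℂ) * Complex.exp (Complex.I * z ^ (1 / 2 : ℂ) * x)
        - ∫ t in Set.Ioi x,
            Complex.cos (z ^ (1 / 2 : ℂ) * ((x : ℂ) - (t : ℂ))) * (q t : ℂ) * f z t) :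
    (fun z : ℂ => g (z - (lam₁ : ℂ)) 0 - Complex.I * z ^ (1 / 2 : ℂ)
        + (1 / 2 : ℂ)
          * ∫ x in Set.Ioi (0 : ℝ),
              (Complex.exp (2 * Complex.I * (z - (lam₁ : ℂ)) ^ (1 / 2 : ℂ) * x) + 1) * (q x : ℂ))
      =O[comap (fun z : ℂ => ‖z‖) atTop ⊓ 𝓟 {z : ℂ | 0 ≤ z.im}]
      (fun z : ℂ => ‖z‖ ^ (-(1 / 2 : ℝ))) := by
  -- integrability of |q| on (0,∞)
  have hqint : IntegrableOn (fun x => |q x|) (Set.Ioi 0) := by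
    refine hq.mono' (hq_meas.abs.aestronglyMeasurable) ?_
    filter_upwards [ae_restrict_mem measurableSet_Ioi] with x hx
    rw [Real.norm_eq_abs, _root_.abs_of_nonneg (abs_nonneg (q x))]
    nlinarith [abs_nonneg (q x), Set.mem_Ioi.1 hx]
  set Q : ℝ := ∫ t in Set.Ioi (0:ℝ), |q t| with hQdef
  have hQ0 : 0 ≤ Q := integral_nonneg fun t => abs_nonneg _
  rw [Asymptotics.isBigO_iff]
  refine ⟨lam₁ + 4 * Q ^ 2, ?_⟩
  rw [Filter.eventually_inf_principal]
  have hmem : {z : ℂ | 1 + 2 * lam₁ + 8 * Q ^ 2 ≤ Complex.abs z}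
      ∈ comap (fun z : ℂ => Complex.abs z) atTop :=
    Filter.preimage_mem_comap (Ici_mem_atTop _)
  filter_upwards [hmem] with z hzR hzim
  replace hzim : 0 ≤ z.im := hzim
  replace hzR : 1 + 2 * lam₁ + 8 * Q ^ 2 ≤ Complex.abs z := hzR
  -- basic facts about z and w
  have hz1 : 1 ≤ Complex.abs z := by nlinarith
  have hz0 : z ≠ 0 := by
    intro h; rw [h, map_zero] at hz1; linarith
  set w : ℂ := z - (lam₁ : ℂ) with hwdef
  have hwabs : Complex.abs z / 2 ≤ Complex.abs w := by
    have h1 : Complex.abs z - Complex.abs ((lam₁ : ℝ) : ℂ) ≤ Complex.abs w := by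
      simpa [Complex.norm_eq_abs, Complex.abs_ofReal, hwdef] using norm_sub_norm_le z ((lam₁ : ℝ) : ℂ)
    rw [Complex.abs_ofReal, abs_of_pos hlam₁] at h1
    nlinarith
  have hw0 : w ≠ 0 := by
    intro h
    rw [h, map_zero] at hwabs
    nlinarith
  have hwim : 0 ≤ w.im := by
    rw [hwdef]
    simpa [Complex.sub_im, Complex.ofReal_im] using hzim
  set k : ℂ := w ^ (1/2 : ℂ) with hkdef
  set s : ℂ := z ^ (1/2 : ℂ) with hsdef
  obtain ⟨hkre, hkim, hkabs, hk2⟩ := sqrt_half_props w hw0 hwim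
  obtain ⟨hsre, hsim, hsabs, hs2⟩ := sqrt_half_props z hz0 hzim
  rw [← hkdef] at hkre hkim hkabs hk2
  rw [← hsdef] at hsre hsim hsabs hs2
  set σ : ℝ := Real.sqrt (Complex.abs z) with hσdef
  have hσ1 : 1 ≤ σ := by
    nlinarith [Real.sq_sqrt (Complex.abs.nonneg z), Real.sqrt_nonneg (Complex.abs z)]
  have habsk_sqrt : Complex.abs k = Real.sqrt (Complex.abs w) := by
    rw [hkabs, Real.sqrt_eq_rpow]
  have habsk_lb : σ / 2 ≤ Complex.abs k := by
    rw [habsk_sqrt]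
    have h1 : Real.sqrt (Complex.abs z / 2) ≤ Real.sqrt (Complex.abs w) :=
      Real.sqrt_le_sqrt hwabs
    have h2 : σ / 2 ≤ Real.sqrt (Complex.abs z / 2) := by
      have hu := Real.sq_sqrt (by positivity : (0:ℝ) ≤ Complex.abs z / 2)
      have hu0 := Real.sqrt_nonneg (Complex.abs z / 2)
      have hσsq := Real.sq_sqrt (Complex.abs.nonneg z)
      have hσ0 := Real.sqrt_nonneg (Complex.abs z)
      nlinarith
    linarith
  have habsk_ge : 2 * Q ≤ Complex.abs k := by
    rw [habsk_sqrt]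
    have h1 : Real.sqrt ((2*Q)^2) ≤ Real.sqrt (Complex.abs w) := by
      apply Real.sqrt_le_sqrt; nlinarith
    rwa [Real.sqrt_sq (by positivity)] at h1
  have hka : 0 < Complex.abs k := by
    calc (0:ℝ) < σ / 2 := by linarith
      _ ≤ _ := habsk_lb
  -- Jost solution data at w
  obtain ⟨hmeas0, ⟨M, hM⟩, hvolt⟩ := hf w hwim hw0
  rw [← hkdef] at hmeas0 hM
  set m : ℝ → ℂ := fun t => Complex.exp (-Complex.I * k * t) * f w t with hmdef
  have hmb := jost_m_bound q hqint f hf w hwim hw0 (by rw [← hkdef]; exact habsk_ge)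
  rw [← hkdef, ← hQdef] at hmb
  have hf_eq : ∀ t : ℝ, f w t = Complex.exp (Complex.I * k * t) * m t := by
    intro t
    simp only [hmdef, ← mul_assoc, ← Complex.exp_add]
    rw [show Complex.I * k * ↑t + -Complex.I * k * ↑t = 0 by ring, Complex.exp_zero, one_mul]
  set A : ℝ → ℂ := fun t =>
    Complex.cos (k * t) * Complex.exp (Complex.I * k * t) * (q t : ℂ) * (m t - 1) with hAdef
  set B : ℝ → ℂ := fun t =>
    (Complex.exp (2 * Complex.I * k * t) + 1) * (q t : ℂ) with hBdef
  have hkim_t : ∀ t : ℝ, 0 ≤ t → 0 ≤ (k * (t:ℂ)).im := by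
    intro t ht
    rw [Complex.mul_im]
    simp only [Complex.ofReal_re, Complex.ofReal_im, mul_zero, zero_add]
    positivity
  have hce : ∀ t : ℝ, 0 ≤ t →
      Complex.abs (Complex.cos (k * t) * Complex.exp (Complex.I * k * t)) ≤ 1 := by
    intro t ht
    have := cos_exp_bound (k * t) (hkim_t t ht)
    rwa [show Complex.I * (k * (t:ℂ)) = Complex.I * k * t by ring] at this
  have hexpB : ∀ t : ℝ, 0 ≤ t →
      Complex.abs (Complex.exp (2 * Complex.I * k * t)) ≤ 1 := by
    intro t ht
    have h0 : 0 ≤ (2 * (k * (t:ℂ))).im := by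
      rw [show (2 * (k * (t:ℂ))).im = 2 * (k * (t:ℂ)).im by simp [Complex.mul_im]]
      linarith [hkim_t t ht]
    have := exp_I_bound (2 * (k * (t:ℂ))) h0
    rwa [show Complex.I * (2 * (k * (t:ℂ))) = 2 * Complex.I * k * t by ring] at this
  -- measurability
  have hqmC : AEStronglyMeasurable (fun t : ℝ => (q t : ℂ)) (volume.restrict (Set.Ioi 0)) :=
    (Complex.measurable_ofReal.comp hq_meas).aestronglyMeasurable
  have hm_meas : AEStronglyMeasurable m (volume.restrict (Set.Ioi 0)) :=
    hmeas0.mono_measure (Measure.restrict_mono Set.Ioi_subset_Ici_self le_rfl)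
  have hcont1 : Continuous fun t : ℝ =>
      Complex.cos (k * t) * Complex.exp (Complex.I * k * t) :=
    (Complex.continuous_cos.comp (continuous_const.mul Complex.continuous_ofReal)).mul
      (Complex.continuous_exp.comp (continuous_const.mul Complex.continuous_ofReal))
  have hcont2 : Continuous fun t : ℝ => Complex.exp (2 * Complex.I * k * t) + 1 :=
    (Complex.continuous_exp.comp (continuous_const.mul Complex.continuous_ofReal)).add
      continuous_const
  have hA_meas : AEStronglyMeasurable A (volume.restrict (Set.Ioi 0)) :=
    ((hcont1.aestronglyMeasurable.mul hqmC).mul (hm_meas.sub aestronglyMeasurable_const))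
  have hB_meas : AEStronglyMeasurable B (volume.restrict (Set.Ioi 0)) :=
    hcont2.aestronglyMeasurable.mul hqmC
  have hAnorm : ∀ t : ℝ, 0 < t → ∀ c : ℝ, Complex.abs (m t - 1) ≤ c → ‖A t‖ ≤ c * |q t| := by
    intro t ht c hc
    simp only [hAdef, Complex.norm_eq_abs, map_mul, Complex.abs_ofReal]
    calc Complex.abs (Complex.cos (k * t)) * Complex.abs (Complex.exp (Complex.I * k * t))
          * |q t| * Complex.abs (m t - 1)
        = (Complex.abs (Complex.cos (k * t)) * Complex.abs (Complex.exp (Complex.I * k * t)))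
            * Complex.abs (m t - 1) * |q t| := by ring
      _ ≤ 1 * c * |q t| := by
          have h1 := hce t ht.le
          rw [map_mul] at h1
          gcongr
      _ = c * |q t| := by ring
  have hA_int : Integrable A (volume.restrict (Set.Ioi 0)) := by
    refine Integrable.mono' (hqint.const_mul (M + 1)) hA_meas ?_
    filter_upwards [ae_restrict_mem measurableSet_Ioi] with t ht
    refine hAnorm t ht (M + 1) ?_
    calc Complex.abs (m t - 1) ≤ Complex.abs (m t) + Complex.abs 1 :=
        Complex.abs.sub_le_add _ _
      _ ≤ M + 1 := by rw [map_one]; exact add_le_add_left (hM t (le_of_lt ht)) 1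
  have hB_int : Integrable B (volume.restrict (Set.Ioi 0)) := by
    refine Integrable.mono' (hqint.const_mul 2) hB_meas ?_
    filter_upwards [ae_restrict_mem measurableSet_Ioi] with t ht
    simp only [hBdef, Complex.norm_eq_abs, map_mul, Complex.abs_ofReal]
    have h1 : Complex.abs (Complex.exp (2 * Complex.I * k * t) + 1) ≤ 2 := by
      calc Complex.abs (Complex.exp (2 * Complex.I * k * t) + 1)
          ≤ Complex.abs (Complex.exp (2 * Complex.I * k * t)) + Complex.abs 1 :=
            Complex.abs.add_le _ _
        _ ≤ 2 := by rw [map_one]; linarith [hexpB t (le_of_lt ht)]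
    nlinarith [abs_nonneg (q t), Complex.abs.nonneg (Complex.exp (2 * Complex.I * k * t) + 1)]
  -- pointwise identity
  have hpt : ∀ t : ℝ,
      Complex.cos (k * ((0:ℂ) - t)) * (q t : ℂ) * f w t = A t + (1/2 : ℂ) * B t := by
    intro t
    have h3 : Complex.cos (k * t) * Complex.exp (Complex.I * k * t)
        = (Complex.exp (2 * Complex.I * k * t) + 1) / 2 := by
      have := cos_exp_id (k * (t:ℂ))
      rwa [show Complex.I * (k * (t:ℂ)) = Complex.I * k * t by ring,
        show 2 * Complex.I * (k * (t:ℂ)) = 2 * Complex.I * k * t by ring] at this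
    rw [show k * ((0:ℂ) - t) = -(k * t) by ring, Complex.cos_neg, hf_eq t]
    simp only [hAdef, hBdef]
    linear_combination (q t : ℂ) * h3
  -- value of g at (w, 0)
  have hgval : g w 0 = Complex.I * k
      - ((∫ t in Set.Ioi (0:ℝ), A t) + (1/2 : ℂ) * ∫ t in Set.Ioi (0:ℝ), B t) := by
    have h0 := hg w hwim hw0 0 le_rfl
    rw [← hkdef] at h0
    rw [h0]
    have hsplit : (∫ t in Set.Ioi (0:ℝ),
          Complex.cos (k * (((0:ℝ):ℂ) - t)) * (q t : ℂ) * f w t)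
        = (∫ t in Set.Ioi (0:ℝ), A t) + (1/2 : ℂ) * ∫ t in Set.Ioi (0:ℝ), B t := by
      calc (∫ t in Set.Ioi (0:ℝ), Complex.cos (k * (((0:ℝ):ℂ) - t)) * (q t : ℂ) * f w t)
          = ∫ t in Set.Ioi (0:ℝ), (A t + (1/2 : ℂ) * B t) := by
            refine integral_congr_ae (Filter.Eventually.of_forall fun t => ?_)
            rw [Complex.ofReal_zero]
            exact hpt t
        _ = (∫ t in Set.Ioi (0:ℝ), A t) + ∫ t in Set.Ioi (0:ℝ), (1/2 : ℂ) * B t :=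
            integral_add hA_int (hB_int.const_mul _)
        _ = (∫ t in Set.Ioi (0:ℝ), A t) + (1/2 : ℂ) * ∫ t in Set.Ioi (0:ℝ), B t := by
            rw [integral_const_mul]
    rw [hsplit]
    simp [Complex.ofReal_zero]
  -- rewrite the target expression
  have hT : g w 0 - Complex.I * s + (1/2 : ℂ) * ∫ x in Set.Ioi (0:ℝ), B x
      = Complex.I * (k - s) - ∫ t in Set.Ioi (0:ℝ), A t := by
    rw [hgval]
    ring
  rw [hT]
  -- norm estimates
  have hIA : Complex.abs (∫ t in Set.Ioi (0:ℝ), A t) ≤ 2 * Q / Complex.abs k * Q := by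
    rw [← Complex.norm_eq_abs]
    refine le_trans (norm_integral_le_integral_norm _) ?_
    have step : (∫ t in Set.Ioi (0:ℝ), ‖A t‖)
        ≤ ∫ t in Set.Ioi (0:ℝ), 2 * Q / Complex.abs k * |q t| := by
      refine integral_mono_of_nonneg (Filter.Eventually.of_forall fun t => norm_nonneg _)
        ((hqint.const_mul _)) ?_
      filter_upwards [ae_restrict_mem measurableSet_Ioi] with t ht
      exact hAnorm t ht _ (hmb t (le_of_lt ht))
    refine le_trans step ?_
    rw [integral_const_mul]
  clear_value w k s σ m A B Q
  have hks : (k - s) * (k + s) = -(lam₁ : ℂ) := by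
    linear_combination hk2 - hs2 + hwdef
  have habs_s_pos : 0 < Complex.abs s := by
    rw [hsabs]
    have : 0 < Complex.abs z := by linarith
    positivity
  have habs_s_le : Complex.abs s ≤ Complex.abs (k + s) := by
    rw [Complex.abs_apply, Complex.abs_apply]
    apply Real.sqrt_le_sqrt
    simp only [Complex.normSq_apply, Complex.add_re, Complex.add_im]
    nlinarith
  have habs_eq : Complex.abs (k - s) * Complex.abs (k + s) = lam₁ := by
    rw [← map_mul, hks, map_neg_eq_map, Complex.abs_ofReal, abs_of_pos hlam₁]
  have habs_ks : Complex.abs (k - s) ≤ lam₁ / Complex.abs s := by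
    rw [le_div_iff₀ habs_s_pos]
    calc Complex.abs (k - s) * Complex.abs s
        ≤ Complex.abs (k - s) * Complex.abs (k + s) := by gcongr
      _ = lam₁ := habs_eq
  -- final numeric assembly
  have hσ0 : (0:ℝ) < σ := lt_of_lt_of_le one_pos hσ1
  have hρ : Complex.abs z ^ (-(1/2 : ℝ)) = σ⁻¹ := by
    rw [Real.rpow_neg (Complex.abs.nonneg z), hσdef, Real.sqrt_eq_rpow]
  have habs_s_eq : Complex.abs s = σ := by
    rw [hsabs, hσdef, Real.sqrt_eq_rpow]
  have h1k : (Complex.abs k)⁻¹ ≤ 2 * σ⁻¹ := by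
    rw [show (2:ℝ) * σ⁻¹ = (σ/2)⁻¹ by field_simp]
    exact inv_anti₀ (by positivity) habsk_lb
  have hnorm1 : ‖Complex.I * (k - s) - ∫ t in Set.Ioi (0:ℝ), A t‖
      ≤ Complex.abs (k - s) + Complex.abs (∫ t in Set.Ioi (0:ℝ), A t) := by
    rw [Complex.norm_eq_abs]
    calc Complex.abs (Complex.I * (k - s) - ∫ t in Set.Ioi (0:ℝ), A t)
        ≤ Complex.abs (Complex.I * (k - s))
          + Complex.abs (∫ t in Set.Ioi (0:ℝ), A t) := Complex.abs.sub_le_add _ _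
      _ = Complex.abs (k - s) + Complex.abs (∫ t in Set.Ioi (0:ℝ), A t) := by
          rw [map_mul, Complex.abs_I, one_mul]
  have hrhs : ‖Complex.abs z ^ (-(1/2 : ℝ))‖ = σ⁻¹ := by
    rw [Real.norm_eq_abs, _root_.abs_of_nonneg (Real.rpow_nonneg (Complex.abs.nonneg z) _), hρ]
  rw [show ‖‖z‖ ^ (-(1/2 : ℝ))‖ = σ⁻¹ from hrhs]
  have hbound2 : 2 * Q / Complex.abs k * Q ≤ 4 * Q ^ 2 * σ⁻¹ := by
    have := mul_le_mul_of_nonneg_left h1k (by positivity : (0:ℝ) ≤ 2 * Q ^ 2)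
    calc 2 * Q / Complex.abs k * Q = 2 * Q ^ 2 * (Complex.abs k)⁻¹ := by ring
      _ ≤ 2 * Q ^ 2 * (2 * σ⁻¹) := this
      _ = 4 * Q ^ 2 * σ⁻¹ := by ring
  have hbound1 : Complex.abs (k - s) ≤ lam₁ * σ⁻¹ := by
    rw [habs_s_eq] at habs_ks
    calc Complex.abs (k - s) ≤ lam₁ / σ := habs_ks
      _ = lam₁ * σ⁻¹ := by ring
  calc ‖Complex.I * (k - s) - ∫ t in Set.Ioi (0:ℝ), A t‖
      ≤ Complex.abs (k - s) + Complex.abs (∫ t in Set.Ioi (0:ℝ), A t) := hnorm1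
    _ ≤ lam₁ * σ⁻¹ + 4 * Q ^ 2 * σ⁻¹ := add_le_add hbound1 (le_trans hIA hbound2)
    _ = (lam₁ + 4 * Q ^ 2) * σ⁻¹ := by ring
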